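/- Let F be a field, let p ≥ 1 and k ≥ 1 be integers with (k : F) ≠ 0, let ζ ∈ F be a primitive k-th root of unity, and let A(x) be a polynomial over F with natDegree at most (k+1)p − 2. Then for every integer j with 0 ≤ j ≤ k−1, the coefficient of x^{(j+1)p−1} in A(x) equals (k : F)⁻¹ · Σ_{i=0}^{k−1} (ζ^{i·j})⁻¹ · r_i, where r_i denotes the coefficient of x^{p−1} in the remainder of A(x) upon division by x^p − ζ^i. -/

import Mathlib

open Polynomial Finset

private lemma aux_coeff_mod {F : Type*} [Field F] (p : ℕ) (hp : 1 ≤ p) (c : F) :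
    ∀ N (A : F[X]), A.degree < (((N + 1) * p - 1 : ℕ) : WithBot ℕ) →
      (A %ₘ (X ^ p - C c)).coeff (p - 1)
        = ∑ m ∈ range N, A.coeff (m * p + (p - 1)) * c ^ m := by
  intro N
  induction N with
  | zero =>
    intro A hdeg
    have hM : (X ^ p - C c : F[X]).Monic := monic_X_pow_sub_C c (by omega)
    have hdM : ((X : F[X]) ^ p - C c).degree = p := degree_X_pow_sub_C (by omega) c
    simp only [Nat.zero_add, zero_add, one_mul] at hdeg
    have h1 : A %ₘ (X ^ p - C c) = A := by
      rw [modByMonic_eq_self_iff hM, hdM]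
      refine hdeg.trans_le ?_
      exact_mod_cast Nat.sub_le p 1
    rw [h1, coeff_eq_zero_of_degree_lt hdeg, sum_range_zero]
  | succ N ih =>
    intro A hdeg
    have hM : (X ^ p - C c : F[X]).Monic := monic_X_pow_sub_C c (by omega)
    have hXp : ((X : F[X]) ^ p).Monic := monic_X_pow p
    set B := A %ₘ X ^ p with hB
    set D := A /ₘ X ^ p with hD
    have hBD : B + X ^ p * D = A := modByMonic_add_div A (X ^ p)
    have hdB : B.degree < (p : WithBot ℕ) := by
      have := degree_modByMonic_lt A hXp
      rwa [degree_X_pow] at this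
    -- coefficients of D in terms of A
    have hDcoeff : ∀ t, D.coeff t = A.coeff (p + t) := by
      intro t
      have h1 : A.coeff (p + t) = B.coeff (p + t) + (X ^ p * D).coeff (p + t) := by
        rw [← hBD]; simp
      have h2 : B.coeff (p + t) = 0 :=
        coeff_eq_zero_of_degree_lt (hdB.trans_le (by exact_mod_cast Nat.le_add_right p t))
      have h3 : (X ^ p * D).coeff (p + t) = D.coeff t := by
        rw [X_pow_mul, coeff_mul_X_pow', if_pos (Nat.le_add_right p t)]
        congr 1
        omega
      rw [h1, h2, h3, zero_add]
    -- degree bound on D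
    have hdD : D.degree < (((N + 1) * p - 1 : ℕ) : WithBot ℕ) := by
      by_cases hD0 : D = 0
      · rw [hD0, degree_zero]; exact WithBot.bot_lt_coe _
      have hA0 : A ≠ 0 := by
        intro h; apply hD0; rw [hD, h, zero_divByMonic]
      have hndD : D.natDegree = A.natDegree - p := by
        rw [hD, natDegree_divByMonic A hXp, natDegree_X_pow]
      have hndA : A.natDegree < (N + 2) * p - 1 :=
        (natDegree_lt_iff_degree_lt hA0).mpr hdeg
      rw [← natDegree_lt_iff_degree_lt hD0, hndD]
      have h1 : (N + 2) * p = (N + 1) * p + p := by ring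
      rw [h1] at hndA
      have h2 : 0 < (N + 1) * p := Nat.mul_pos (by omega) hp
      have hpA : p ≤ A.natDegree := by
        have hnd : ¬ (A.degree < ((X : F[X]) ^ p).degree) := fun h =>
          hD0 (hD ▸ (divByMonic_eq_zero_iff hXp).mpr h)
        rw [not_lt] at hnd
        simpa using natDegree_le_natDegree hnd
      have harith : ∀ a n : ℕ, 0 < a → p ≤ n → n < a + p - 1 → n - p < a - 1 := by
        intro a n ha hpn hn; omega
      exact harith _ _ h2 hpA hndA
    -- decompose the remainder
    have hAeq : A = (B + C c * D) + (X ^ p - C c) * D := by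
      rw [← hBD]; ring
    have hmod : A %ₘ (X ^ p - C c) = B + C c * (D %ₘ (X ^ p - C c)) := by
      conv_lhs => rw [hAeq]
      rw [add_modByMonic, ((modByMonic_eq_zero_iff_dvd hM).mpr ⟨D, rfl⟩), add_zero,
        add_modByMonic]
      congr 1
      · rw [modByMonic_eq_self_iff hM, degree_X_pow_sub_C (by omega) c]
        exact hdB
      · rw [← smul_eq_C_mul, ← smul_eq_C_mul, smul_modByMonic]
    have hBp : B.coeff (p - 1) = A.coeff (p - 1) := by
      have h1 : A.coeff (p - 1) = B.coeff (p - 1) + (X ^ p * D).coeff (p - 1) := by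
        rw [← hBD]; simp
      have h3 : (X ^ p * D).coeff (p - 1) = 0 := by
        rw [X_pow_mul, coeff_mul_X_pow']
        simp [Nat.not_le.mpr (by omega : p - 1 < p)]
      rw [h1, h3, add_zero]
    rw [hmod, coeff_add, coeff_C_mul, ih D hdD, hBp, sum_range_succ',
      add_comm (A.coeff (p - 1))]
    congr 1
    · rw [mul_sum]
      refine sum_congr rfl fun m _ => ?_
      rw [hDcoeff]
      have heq : p + (m * p + (p - 1)) = (m + 1) * p + (p - 1) := by
        obtain ⟨q, rfl⟩ : ∃ q, p = q + 1 := ⟨p - 1, by omega⟩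
        simp only [Nat.add_sub_cancel]
        ring
      rw [heq]
      ring
    · simp

/-- Lemma 2: the strided coefficients `c_{(j+1)p-1}` of a polynomial `A` of degree at
most `(k+1)p - 2` can be recovered by an inverse DFT from the coefficients of
`x^(p-1)` of the remainders of `A` modulo `x^p - ζ^i`, for `ζ` a primitive
`k`-th root of unity. -/
theorem stmt_3 {F : Type*} [Field F] (p k : ℕ) (hp : 1 ≤ p) (hk : 1 ≤ k)
    (hkF : (k : F) ≠ 0) (ζ : F) (hζ : IsPrimitiveRoot ζ k)
    (A : F[X]) (hA : A.natDegree ≤ (k + 1) * p - 2)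
    (j : ℕ) (hj : j ≤ k - 1) :
    A.coeff ((j + 1) * p - 1)
      = (k : F)⁻¹ * ∑ i ∈ range k,
          (ζ ^ (i * j))⁻¹ * (A %ₘ (X ^ p - C (ζ ^ i))).coeff (p - 1) := by
  have hjk : j < k := by omega
  have hζ0 : ζ ≠ 0 := by
    intro h
    have := hζ.pow_eq_one
    rw [h, zero_pow (by omega)] at this
    exact one_ne_zero this.symm
  have hdeg : A.degree < (((k + 1) * p - 1 : ℕ) : WithBot ℕ) := by
    by_cases hA0 : A = 0
    · rw [hA0, degree_zero]; exact WithBot.bot_lt_coe _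
    · rw [← natDegree_lt_iff_degree_lt hA0]
      have h2 : 2 ≤ (k + 1) * p := by
        calc 2 = 2 * 1 := by norm_num
        _ ≤ (k + 1) * p := Nat.mul_le_mul (by omega) hp
      have harith : ∀ a n : ℕ, 2 ≤ a → n ≤ a - 2 → n < a - 1 := by
        intro a n ha hn; omega
      exact harith _ _ h2 hA
  have hmod : ∀ i, (A %ₘ (X ^ p - C (ζ ^ i))).coeff (p - 1)
      = ∑ m ∈ range k, A.coeff (m * p + (p - 1)) * (ζ ^ i) ^ m :=
    fun i => aux_coeff_mod p hp (ζ ^ i) k A hdeg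
  -- orthogonality
  have horth : ∀ m < k, (∑ i ∈ range k, (ζ ^ m * (ζ ^ j)⁻¹) ^ i)
      = if m = j then (k : F) else 0 := by
    intro m hm
    by_cases hmj : m = j
    · subst hmj
      simp [mul_inv_cancel₀ (pow_ne_zero m hζ0)]
    · rw [if_neg hmj]
      have hξ1 : ζ ^ m * (ζ ^ j)⁻¹ ≠ 1 := by
        intro h
        apply hmj
        apply hζ.pow_inj hm hjk
        field_simp at h
        exact h
      rw [geom_sum_eq hξ1]
      have hξk : (ζ ^ m * (ζ ^ j)⁻¹) ^ k = 1 := by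
        rw [mul_pow, inv_pow, ← pow_mul, ← pow_mul, mul_comm m k, mul_comm j k,
          pow_mul, pow_mul, hζ.pow_eq_one, one_pow, one_pow, inv_one, mul_one]
      rw [hξk, sub_self, zero_div]
  calc A.coeff ((j + 1) * p - 1)
      = A.coeff (j * p + (p - 1)) := by
        congr 1
        obtain ⟨q, rfl⟩ : ∃ q, p = q + 1 := ⟨p - 1, by omega⟩
        have h : (j + 1) * (q + 1) = j * (q + 1) + q + 1 := by ring
        rw [h]
        simp
    _ = (k : F)⁻¹ * ((k : F) * A.coeff (j * p + (p - 1))) := by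
        field_simp
    _ = (k : F)⁻¹ * ∑ i ∈ range k,
          (ζ ^ (i * j))⁻¹ * (A %ₘ (X ^ p - C (ζ ^ i))).coeff (p - 1) := by
        congr 1
        rw [show ∀ s : F, s = ∑ i ∈ range k,
            (ζ ^ (i * j))⁻¹ * (A %ₘ (X ^ p - C (ζ ^ i))).coeff (p - 1) ↔
            ∑ i ∈ range k,
            (ζ ^ (i * j))⁻¹ * (A %ₘ (X ^ p - C (ζ ^ i))).coeff (p - 1) = s
          from fun s => eq_comm]
        calc ∑ i ∈ range k, (ζ ^ (i * j))⁻¹ * (A %ₘ (X ^ p - C (ζ ^ i))).coeff (p - 1)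
            = ∑ i ∈ range k, ∑ m ∈ range k,
                A.coeff (m * p + (p - 1)) * (ζ ^ m * (ζ ^ j)⁻¹) ^ i := by
              refine sum_congr rfl fun i _ => ?_
              rw [hmod i, mul_sum]
              refine sum_congr rfl fun m _ => ?_
              have e1 : (ζ ^ m * (ζ ^ j)⁻¹) ^ i = ζ ^ (i * m) * (ζ ^ (i * j))⁻¹ := by
                rw [mul_pow, inv_pow, ← pow_mul, ← pow_mul, mul_comm m i, mul_comm j i]
              have e2 : (ζ ^ i) ^ m = ζ ^ (i * m) := (pow_mul ζ i m).symm
              rw [e2, e1]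
              ring
          _ = ∑ m ∈ range k, A.coeff (m * p + (p - 1)) *
                ∑ i ∈ range k, (ζ ^ m * (ζ ^ j)⁻¹) ^ i := by
              rw [sum_comm]
              exact sum_congr rfl fun m _ => by rw [mul_sum]
          _ = (k : F) * A.coeff (j * p + (p - 1)) := by
              rw [sum_congr rfl (fun m hm => by rw [horth m (mem_range.mp hm)])]
              rw [sum_congr rfl (fun m _ => mul_ite _ _ _ _)]
              simp only [mul_zero]
              rw [sum_ite_eq' (range k) j (fun m => A.coeff (m * p + (p - 1)) * (k : F))]
              rw [if_pos (mem_range.mpr hjk)]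
              ring
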